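/- Let S be a finite set, let p, q ∈ Σ_S, let α > 0, and let f : S → ℝ satisfy 0 ≤ f(s) ≤ b for all s ∈ S. If KL(p, q) ≤ α, then both Var_q(f) ≤ 2 · Var_p(f) + 4 b² α and Var_p(f) ≤ 2 · Var_q(f) + 4 b² α. -/

import Mathlib

open Finset

/-- Kullback–Leibler divergence between two finitely supported distributions, with the
conventions `0 · log(0/x) = 0` and `KL(p,q) = +∞` when `p(s) > 0` while `q(s) = 0`. -/
noncomputable def KLdiv {S : Type*} [Fintype S] (p q : S → ℝ) : EReal :=
  ∑ s, if p s = 0 then (0 : EReal)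
    else if q s = 0 then (⊤ : EReal)
    else ((p s * Real.log (p s / q s) : ℝ) : EReal)


lemma coe_sum_ereal {ι : Type*} (s : Finset ι) (f : ι → ℝ) :
    ((∑ i ∈ s, f i : ℝ) : EReal) = ∑ i ∈ s, (f i : EReal) := by
  induction s using Finset.cons_induction with
  | empty => simp
  | cons a s h ih => simp [Finset.sum_cons, ih]

lemma aux_change {S : Type*} [Fintype S] (p q : S → ℝ)
    (hp : ∀ s, 0 ≤ p s) (hq : ∀ s, 0 ≤ q s)
    (c α : ℝ) (hc : 0 ≤ c) (hα : 0 ≤ α)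
    (g : S → ℝ) (hg0 : ∀ s, 0 ≤ g s) (hgc : ∀ s, g s ≤ c)
    (hH : ∑ s, (Real.sqrt (q s) - Real.sqrt (p s)) ^ 2 ≤ α) :
    ∑ s, q s * g s ≤ 2 * (∑ s, p s * g s) + 4 * c * α := by
  set A := ∑ s, q s * g s with hA
  set B := ∑ s, p s * g s with hB
  have hA0 : 0 ≤ A := Finset.sum_nonneg fun s _ => mul_nonneg (hq s) (hg0 s)
  have hB0 : 0 ≤ B := Finset.sum_nonneg fun s _ => mul_nonneg (hp s) (hg0 s)
  have hcα : 0 ≤ c * α := mul_nonneg hc hα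
  have key : (A - B) ^ 2 ≤ (c * α) * (2 * (A + B)) := by
    have hdiff : A - B = ∑ s, ((Real.sqrt (q s) - Real.sqrt (p s)) * Real.sqrt (g s))
        * ((Real.sqrt (q s) + Real.sqrt (p s)) * Real.sqrt (g s)) := by
      rw [hA, hB, ← Finset.sum_sub_distrib]
      refine Finset.sum_congr rfl fun s _ => ?_
      have h1 : Real.sqrt (q s) * Real.sqrt (q s) = q s := Real.mul_self_sqrt (hq s)
      have h2 : Real.sqrt (p s) * Real.sqrt (p s) = p s := Real.mul_self_sqrt (hp s)
      have h3 : Real.sqrt (g s) * Real.sqrt (g s) = g s := Real.mul_self_sqrt (hg0 s)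
      nlinarith [h1, h2, h3]
    have hcs := Finset.sum_mul_sq_le_sq_mul_sq Finset.univ
      (fun s => (Real.sqrt (q s) - Real.sqrt (p s)) * Real.sqrt (g s))
      (fun s => (Real.sqrt (q s) + Real.sqrt (p s)) * Real.sqrt (g s))
    rw [← hdiff] at hcs
    have h1 : ∑ s, ((Real.sqrt (q s) - Real.sqrt (p s)) * Real.sqrt (g s)) ^ 2 ≤ c * α := by
      calc ∑ s, ((Real.sqrt (q s) - Real.sqrt (p s)) * Real.sqrt (g s)) ^ 2
          ≤ ∑ s, (Real.sqrt (q s) - Real.sqrt (p s)) ^ 2 * c := by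
            refine Finset.sum_le_sum fun s _ => ?_
            rw [mul_pow, Real.sq_sqrt (hg0 s)]
            exact mul_le_mul_of_nonneg_left (hgc s) (sq_nonneg _)
        _ = (∑ s, (Real.sqrt (q s) - Real.sqrt (p s)) ^ 2) * c := by
            rw [Finset.sum_mul]
        _ ≤ c * α := by rw [mul_comm]; exact mul_le_mul_of_nonneg_left hH hc
    have h2 : ∑ s, ((Real.sqrt (q s) + Real.sqrt (p s)) * Real.sqrt (g s)) ^ 2
        ≤ 2 * (A + B) := by
      have : ∀ s : S, ((Real.sqrt (q s) + Real.sqrt (p s)) * Real.sqrt (g s)) ^ 2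
          ≤ 2 * (q s * g s) + 2 * (p s * g s) := by
        intro s
        have h1 : Real.sqrt (q s) ^ 2 = q s := Real.sq_sqrt (hq s)
        have h2 : Real.sqrt (p s) ^ 2 = p s := Real.sq_sqrt (hp s)
        have h3 : Real.sqrt (g s) ^ 2 = g s := Real.sq_sqrt (hg0 s)
        nlinarith [sq_nonneg (Real.sqrt (q s) - Real.sqrt (p s)), hg0 s,
          sq_nonneg (Real.sqrt (q s) + Real.sqrt (p s))]
      calc ∑ s, ((Real.sqrt (q s) + Real.sqrt (p s)) * Real.sqrt (g s)) ^ 2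
          ≤ ∑ s, (2 * (q s * g s) + 2 * (p s * g s)) := Finset.sum_le_sum fun s _ => this s
        _ = 2 * (A + B) := by rw [Finset.sum_add_distrib, ← Finset.mul_sum, ← Finset.mul_sum]; ring
    calc (A - B) ^ 2 ≤ _ := hcs
      _ ≤ (c * α) * (2 * (A + B)) := by
          apply mul_le_mul h1 h2 (Finset.sum_nonneg fun s _ => sq_nonneg _) hcα
  nlinarith [key, hA0, hB0, hcα, sq_nonneg (A - B)]

lemma kl_extract {S : Type*} [Fintype S] (p q : S → ℝ) (α : ℝ)
    (hKL : KLdiv p q ≤ (α : EReal)) :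
    (∀ s, p s ≠ 0 → q s ≠ 0) ∧
    (∑ s, (if p s = 0 then (0:ℝ) else p s * Real.log (p s / q s))) ≤ α := by
  classical
  set r : S → ℝ := fun s => if p s = 0 then (0:ℝ) else p s * Real.log (p s / q s) with hr
  have hsupp : ∀ s, p s ≠ 0 → q s ≠ 0 := by
    intro s₀ hp0 hq0
    have htop : KLdiv p q = ⊤ := by
      rw [KLdiv, ← Finset.add_sum_erase _ _ (Finset.mem_univ s₀)]
      rw [if_neg hp0, if_pos hq0]
      apply EReal.top_add_of_ne_bot
      have hle : ((∑ s ∈ Finset.univ.erase s₀, r s : ℝ) : EReal)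
          ≤ ∑ s ∈ Finset.univ.erase s₀, (if p s = 0 then (0 : EReal)
            else if q s = 0 then (⊤ : EReal)
            else ((p s * Real.log (p s / q s) : ℝ) : EReal)) := by
        rw [coe_sum_ereal]
        refine Finset.sum_le_sum fun s _ => ?_
        by_cases h1 : p s = 0
        · simp [hr, h1]
        · by_cases h2 : q s = 0
          · simp [h2, h1, le_top]
          · simp [hr, h1, h2]
      exact ne_of_gt (lt_of_lt_of_le (EReal.bot_lt_coe _) hle)
    rw [htop] at hKL
    exact absurd hKL (by simp)
  refine ⟨hsupp, ?_⟩
  have hle : ((∑ s, r s : ℝ) : EReal) ≤ KLdiv p q := by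
    rw [coe_sum_ereal, KLdiv]
    refine Finset.sum_le_sum fun s _ => ?_
    by_cases h1 : p s = 0
    · simp [hr, h1]
    · rw [if_neg h1, if_neg (hsupp s h1)]
      simp [hr, h1]
  have := le_trans hle hKL
  exact_mod_cast this

lemma hellinger_le_kl {S : Type*} [Fintype S] (p q : S → ℝ)
    (hp : ∀ s, 0 ≤ p s) (hpsum : ∑ s, p s = 1)
    (hq : ∀ s, 0 ≤ q s) (hqsum : ∑ s, q s = 1)
    (hsupp : ∀ s, p s ≠ 0 → q s ≠ 0) :
    ∑ s, (Real.sqrt (q s) - Real.sqrt (p s)) ^ 2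
      ≤ ∑ s, (if p s = 0 then (0:ℝ) else p s * Real.log (p s / q s)) := by
  have key : ∀ s : S, 2 * (p s - Real.sqrt (p s) * Real.sqrt (q s))
      ≤ (if p s = 0 then (0:ℝ) else p s * Real.log (p s / q s)) := by
    intro s
    by_cases h1 : p s = 0
    · simp [h1]
    · rw [if_neg h1]
      have hps : 0 < p s := lt_of_le_of_ne (hp s) (Ne.symm h1)
      have hqs : 0 < q s := lt_of_le_of_ne (hq s) (Ne.symm (hsupp s h1))
      set sp := Real.sqrt (p s) with hsp
      set sq := Real.sqrt (q s) with hsq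
      have hsp2 : sp ^ 2 = p s := Real.sq_sqrt (hp s)
      have hsq2 : sq ^ 2 = q s := Real.sq_sqrt (hq s)
      have hsppos : 0 < sp := Real.sqrt_pos.mpr hps
      have hsqpos : 0 < sq := Real.sqrt_pos.mpr hqs
      have hlog : Real.log (sq / sp) ≤ sq / sp - 1 :=
        Real.log_le_sub_one_of_pos (div_pos hsqpos hsppos)
      have hlogeq : Real.log (p s / q s) = -2 * Real.log (sq / sp) := by
        rw [Real.log_div (ne_of_gt hsqpos) (ne_of_gt hsppos),
          Real.log_div (ne_of_gt hps) (ne_of_gt hqs),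
          hsp, hsq, Real.log_sqrt (hp s), Real.log_sqrt (hq s)]
        ring
      have e : sp ^ 2 * (sq / sp) = sp * sq := by field_simp
      rw [hlogeq, ← hsp2]
      nlinarith [mul_le_mul_of_nonneg_left hlog (le_of_lt (mul_pos two_pos (pow_pos hsppos 2)))]
  calc ∑ s, (Real.sqrt (q s) - Real.sqrt (p s)) ^ 2
      = ∑ s, (2 * (p s - Real.sqrt (p s) * Real.sqrt (q s)) + (q s - p s)) := by
        refine Finset.sum_congr rfl fun s _ => ?_
        have hsq2 : Real.sqrt (q s) ^ 2 = q s := Real.sq_sqrt (hq s)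
        have hsp2 : Real.sqrt (p s) ^ 2 = p s := Real.sq_sqrt (hp s)
        nlinarith [hsq2, hsp2]
    _ = (∑ s, 2 * (p s - Real.sqrt (p s) * Real.sqrt (q s))) + ((∑ s, q s) - ∑ s, p s) := by
        rw [Finset.sum_add_distrib, Finset.sum_sub_distrib]
    _ = ∑ s, 2 * (p s - Real.sqrt (p s) * Real.sqrt (q s)) := by
        rw [hpsum, hqsum]; ring
    _ ≤ _ := Finset.sum_le_sum fun s _ => key s


lemma var_shift {S : Type*} [Fintype S] (q : S → ℝ) (f : S → ℝ)
    (hqsum : ∑ s, q s = 1) (c : ℝ) :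
    ∑ s, q s * (f s - ∑ s', q s' * f s') ^ 2 ≤ ∑ s, q s * (f s - c) ^ 2 := by
  set μ := ∑ s', q s' * f s' with hμ
  have hid : ∑ s, q s * (f s - c) ^ 2
      = (∑ s, q s * (f s - μ) ^ 2) + (μ - c) ^ 2 := by
    have step : ∀ s : S, q s * (f s - c) ^ 2
        = q s * (f s - μ) ^ 2 + ((μ - c) * 2) * (q s * f s) - ((μ - c) * (c + μ)) * q s := by
      intro s; ring
    calc ∑ s, q s * (f s - c) ^ 2
        = ∑ s, (q s * (f s - μ) ^ 2 + ((μ - c) * 2) * (q s * f s)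
            - ((μ - c) * (c + μ)) * q s) := Finset.sum_congr rfl fun s _ => step s
      _ = (∑ s, q s * (f s - μ) ^ 2) + ((μ - c) * 2) * (∑ s, q s * f s)
            - ((μ - c) * (c + μ)) * (∑ s, q s) := by
          rw [Finset.sum_sub_distrib, Finset.sum_add_distrib, ← Finset.mul_sum,
            ← Finset.mul_sum]
      _ = (∑ s, q s * (f s - μ) ^ 2) + (μ - c) ^ 2 := by
          rw [hqsum, ← hμ]; ring
  nlinarith [sq_nonneg (μ - c)]

/-- If `KL(p,q) ≤ α` then the variances of a `[0,b]`-valued function under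
`p` and under `q` are within a factor `2` of each other up to an additive `4 b² α`. -/
theorem variance_comparison_via_kl {S : Type*} [Fintype S]
    (p q : S → ℝ) (hp : ∀ s, 0 ≤ p s) (hpsum : ∑ s, p s = 1)
    (hq : ∀ s, 0 ≤ q s) (hqsum : ∑ s, q s = 1)
    (α : ℝ) (hα : 0 < α)
    (b : ℝ) (f : S → ℝ) (hf : ∀ s, 0 ≤ f s ∧ f s ≤ b)
    (hKL : KLdiv p q ≤ (α : EReal)) :
    (∑ s, q s * (f s - ∑ s', q s' * f s') ^ 2)
        ≤ 2 * (∑ s, p s * (f s - ∑ s', p s' * f s') ^ 2) + 4 * b ^ 2 * α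
    ∧ (∑ s, p s * (f s - ∑ s', p s' * f s') ^ 2)
        ≤ 2 * (∑ s, q s * (f s - ∑ s', q s' * f s') ^ 2) + 4 * b ^ 2 * α := by
  obtain ⟨hsupp, hKLr⟩ := kl_extract p q α hKL
  have hH : ∑ s, (Real.sqrt (q s) - Real.sqrt (p s)) ^ 2 ≤ α :=
    le_trans (hellinger_le_kl p q hp hpsum hq hqsum hsupp) hKLr
  have hH' : ∑ s, (Real.sqrt (p s) - Real.sqrt (q s)) ^ 2 ≤ α := by
    calc ∑ s, (Real.sqrt (p s) - Real.sqrt (q s)) ^ 2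
        = ∑ s, (Real.sqrt (q s) - Real.sqrt (p s)) ^ 2 :=
          Finset.sum_congr rfl fun s _ => by ring
      _ ≤ α := hH
  have hne : Nonempty S := by
    by_contra h
    rw [not_nonempty_iff] at h
    rw [Finset.sum_eq_zero (fun s _ => (h.false s).elim)] at hpsum
    norm_num at hpsum
  obtain ⟨s₀⟩ := hne
  have hb : 0 ≤ b := le_trans (hf s₀).1 (hf s₀).2
  set μp := ∑ s', p s' * f s' with hμp
  set μq := ∑ s', q s' * f s' with hμq
  have hμpb : 0 ≤ μp ∧ μp ≤ b := by
    constructor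
    · exact Finset.sum_nonneg fun s _ => mul_nonneg (hp s) (hf s).1
    · calc μp ≤ ∑ s', p s' * b :=
            Finset.sum_le_sum fun s _ => mul_le_mul_of_nonneg_left (hf s).2 (hp s)
        _ = b := by rw [← Finset.sum_mul, hpsum, one_mul]
  have hμqb : 0 ≤ μq ∧ μq ≤ b := by
    constructor
    · exact Finset.sum_nonneg fun s _ => mul_nonneg (hq s) (hf s).1
    · calc μq ≤ ∑ s', q s' * b :=
            Finset.sum_le_sum fun s _ => mul_le_mul_of_nonneg_left (hf s).2 (hq s)
        _ = b := by rw [← Finset.sum_mul, hqsum, one_mul]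
  have hbb : 0 ≤ b ^ 2 := sq_nonneg b
  constructor
  · -- Var_q ≤ 2 Var_p + 4 b² α
    calc ∑ s, q s * (f s - μq) ^ 2
        ≤ ∑ s, q s * (f s - μp) ^ 2 := var_shift q f hqsum μp
      _ ≤ 2 * (∑ s, p s * (f s - μp) ^ 2) + 4 * b ^ 2 * α := by
          apply aux_change p q hp hq (b ^ 2) α hbb hα.le
            (fun s => (f s - μp) ^ 2) (fun s => sq_nonneg _) ?_ hH
          intro s
          show (f s - μp) ^ 2 ≤ b ^ 2
          exact sq_le_sq' (by linarith [(hf s).1, hμpb.2]) (by linarith [(hf s).2, hμpb.1])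
  · -- Var_p ≤ 2 Var_q + 4 b² α
    calc ∑ s, p s * (f s - μp) ^ 2
        ≤ ∑ s, p s * (f s - μq) ^ 2 := var_shift p f hpsum μq
      _ ≤ 2 * (∑ s, q s * (f s - μq) ^ 2) + 4 * b ^ 2 * α := by
          apply aux_change q p hq hp (b ^ 2) α hbb hα.le
            (fun s => (f s - μq) ^ 2) (fun s => sq_nonneg _) ?_ hH'
          intro s
          show (f s - μq) ^ 2 ≤ b ^ 2
          exact sq_le_sq' (by linarith [(hf s).1, hμqb.2]) (by linarith [(hf s).2, hμqb.1])
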